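/- Let 0 < q < 1, p₁ = 4q(1−q)((1−q)² + q²), and p₂ = 4q²(1−q)²/(1 − p₁). Let E = (e₁, e₂, e₃, e₄) be an i.i.d. Bernoulli(q) vector. Then the conditional probability, given that e₁⊕e₂⊕e₃⊕e₄ = 0 and e₂ ⊕ e₄ = 0, that e₃ ⊕ e₄ = 1 equals p₃ := 2q²(1−q)²/((1 − p₁)(1 − p₂)). Concretely, ∑_{e: e₁⊕e₂⊕e₃⊕e₄=0, e₂⊕e₄=0, e₃⊕e₄=1} P_q(e) = 2q²(1−q)², and ∑_{e: e₁⊕e₂⊕e₃⊕e₄=0, e₂⊕e₄=0} P_q(e) = (1 − p₁)(1 − p₂) > 0. (This is the third-round erasure probability in the polarization-based protocol with N = 4; the constraint e₃⊕e₄ corresponds to the third column (0,0,1,1)ᵀ of G₄.) -/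

import Mathlib

open Finset

/-- Hamming weight of a binary string `e ∈ {0,1}^n`. -/
def wt {n : ℕ} (e : Fin n → Bool) : ℕ := (Finset.univ.filter fun i => e i = true).card

/-- i.i.d. Bernoulli(q) probability of the binary string `e ∈ {0,1}^n`. -/
noncomputable def Pq (q : ℝ) {n : ℕ} (e : Fin n → Bool) : ℝ :=
  q ^ wt e * (1 - q) ^ (n - wt e)

/-- For `0 < q < 1`, `p₁ = 4q(1−q)((1−q)² + q²)` and `p₂ = 4q²(1−q)²/(1 − p₁)`: for an
i.i.d. Bernoulli(q) vector `(e₁,e₂,e₃,e₄)`, the probability of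
`{e₁⊕e₂⊕e₃⊕e₄ = 0, e₂⊕e₄ = 0, e₃⊕e₄ = 1}` equals `2q²(1−q)²`, the probability of
`{e₁⊕e₂⊕e₃⊕e₄ = 0, e₂⊕e₄ = 0}` equals `(1 − p₁)(1 − p₂) > 0`, and hence the conditional
probability of `e₃ ⊕ e₄ = 1` given both constraints equals
`p₃ = 2q²(1−q)²/((1 − p₁)(1 − p₂))`. -/
theorem third_round_erasure_prob (q : ℝ) (hq0 : 0 < q) (hq1 : q < 1) :
    (∑ e ∈ Finset.univ.filter
        (fun e : Fin 4 → Bool =>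
          xor (e 0) (xor (e 1) (xor (e 2) (e 3))) = false ∧ xor (e 1) (e 3) = false ∧
            xor (e 2) (e 3) = true), Pq q e)
      = 2 * q ^ 2 * (1 - q) ^ 2 ∧
    (∑ e ∈ Finset.univ.filter
        (fun e : Fin 4 → Bool =>
          xor (e 0) (xor (e 1) (xor (e 2) (e 3))) = false ∧ xor (e 1) (e 3) = false), Pq q e)
      = (1 - 4 * q * (1 - q) * ((1 - q) ^ 2 + q ^ 2)) *
          (1 - 4 * q ^ 2 * (1 - q) ^ 2 / (1 - 4 * q * (1 - q) * ((1 - q) ^ 2 + q ^ 2))) ∧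
    0 < (1 - 4 * q * (1 - q) * ((1 - q) ^ 2 + q ^ 2)) *
          (1 - 4 * q ^ 2 * (1 - q) ^ 2 / (1 - 4 * q * (1 - q) * ((1 - q) ^ 2 + q ^ 2))) ∧
    (∑ e ∈ Finset.univ.filter
        (fun e : Fin 4 → Bool =>
          xor (e 0) (xor (e 1) (xor (e 2) (e 3))) = false ∧ xor (e 1) (e 3) = false ∧
            xor (e 2) (e 3) = true), Pq q e) /
      (∑ e ∈ Finset.univ.filter
        (fun e : Fin 4 → Bool =>
          xor (e 0) (xor (e 1) (xor (e 2) (e 3))) = false ∧ xor (e 1) (e 3) = false), Pq q e)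
      = 2 * q ^ 2 * (1 - q) ^ 2 /
          ((1 - 4 * q * (1 - q) * ((1 - q) ^ 2 + q ^ 2)) *
            (1 - 4 * q ^ 2 * (1 - q) ^ 2 / (1 - 4 * q * (1 - q) * ((1 - q) ^ 2 + q ^ 2)))) := by

  have hp1 : (1 - 4 * q * (1 - q) * ((1 - q) ^ 2 + q ^ 2))
      = (q ^ 2 + (1 - q) ^ 2) ^ 2 + (2 * q * (1 - q)) ^ 2 := by ring
  have hp1pos : 0 < 1 - 4 * q * (1 - q) * ((1 - q) ^ 2 + q ^ 2) := by
    rw [hp1]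
    positivity
  have hp1ne : (1 - 4 * q * (1 - q) * ((1 - q) ^ 2 + q ^ 2)) ≠ 0 := ne_of_gt hp1pos
  have hS1 : (Finset.univ.filter
        (fun e : Fin 4 → Bool =>
          xor (e 0) (xor (e 1) (xor (e 2) (e 3))) = false ∧ xor (e 1) (e 3) = false ∧
            xor (e 2) (e 3) = true))
      = ({![true, false, true, false], ![false, true, false, true]} : Finset (Fin 4 → Bool)) := by
    decide
  have hS2 : (Finset.univ.filter
        (fun e : Fin 4 → Bool =>
          xor (e 0) (xor (e 1) (xor (e 2) (e 3))) = false ∧ xor (e 1) (e 3) = false))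
      = ({![false, false, false, false], ![true, false, true, false],
          ![false, true, false, true], ![true, true, true, true]} : Finset (Fin 4 → Bool)) := by
    decide
  have hw1 : wt ![true, false, true, false] = 2 := by decide
  have hw2 : wt ![false, true, false, true] = 2 := by decide
  have hw0 : wt ![false, false, false, false] = 0 := by decide
  have hw4 : wt ![true, true, true, true] = 4 := by decide
  have h1 : (∑ e ∈ Finset.univ.filter
        (fun e : Fin 4 → Bool =>
          xor (e 0) (xor (e 1) (xor (e 2) (e 3))) = false ∧ xor (e 1) (e 3) = false ∧
            xor (e 2) (e 3) = true), Pq q e)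
      = 2 * q ^ 2 * (1 - q) ^ 2 := by
    rw [hS1]
    rw [Finset.sum_pair (by decide)]
    simp only [Pq, hw1, hw2]
    norm_num
    ring
  have h2 : (∑ e ∈ Finset.univ.filter
        (fun e : Fin 4 → Bool =>
          xor (e 0) (xor (e 1) (xor (e 2) (e 3))) = false ∧ xor (e 1) (e 3) = false), Pq q e)
      = (1 - 4 * q * (1 - q) * ((1 - q) ^ 2 + q ^ 2)) *
          (1 - 4 * q ^ 2 * (1 - q) ^ 2 / (1 - 4 * q * (1 - q) * ((1 - q) ^ 2 + q ^ 2))) := by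
    rw [hS2]
    rw [show (({![false, false, false, false], ![true, false, true, false],
          ![false, true, false, true], ![true, true, true, true]} : Finset (Fin 4 → Bool))) =
        insert ![false, false, false, false] (insert ![true, false, true, false]
          ({![false, true, false, true], ![true, true, true, true]} : Finset (Fin 4 → Bool)))
        from rfl]
    rw [Finset.sum_insert (by decide), Finset.sum_insert (by decide),
      Finset.sum_pair (by decide)]
    simp only [Pq, hw0, hw1, hw2, hw4]
    rw [mul_sub, mul_one, mul_div_cancel₀ _ hp1ne]
    ring
  have hpos : 0 < (1 - 4 * q * (1 - q) * ((1 - q) ^ 2 + q ^ 2)) *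
          (1 - 4 * q ^ 2 * (1 - q) ^ 2 / (1 - 4 * q * (1 - q) * ((1 - q) ^ 2 + q ^ 2))) := by
    have : (1 - 4 * q * (1 - q) * ((1 - q) ^ 2 + q ^ 2)) *
          (1 - 4 * q ^ 2 * (1 - q) ^ 2 / (1 - 4 * q * (1 - q) * ((1 - q) ^ 2 + q ^ 2)))
        = (1 - 4 * q * (1 - q) * ((1 - q) ^ 2 + q ^ 2)) - 4 * q ^ 2 * (1 - q) ^ 2 := by
      field_simp
    rw [this, hp1]
    have h1q : 0 < 1 - q := by linarith
    nlinarith [sq_nonneg (q ^ 2 + (1 - q) ^ 2), sq_nonneg (q * (1 - q)), mul_pos hq0 h1q]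
  exact ⟨h1, h2, hpos, by rw [h1, h2]⟩
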